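/- Let (E, ≺) be a finite poset with an indexed chain partition into n disjoint chains, and let (S, <) be its ES-transform. Then (S, <) is interleaving-consistent. -/

import Mathlib

open scoped Classical

/-- An *indexed chain partition* of a poset `E` into `n` disjoint chains:
numbers `m i ≥ 1` and maps `e i : {1,…,m i} → E` which are strictly
order-preserving (hence injective), have pairwise disjoint images, and
jointly cover `E`.  Write `(i,k)` for `e i k`. -/
structure EventCP (E : Type*) [PartialOrder E] (n : ℕ) where
  m : Fin n → ℕ
  one_le_m : ∀ i : Fin n, 1 ≤ m i
  e : Fin n → ℕ → E
  mono : ∀ i : Fin n, ∀ k l : ℕ, 1 ≤ k → k < l → l ≤ m i → e i k < e i l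
  disj : ∀ i j : Fin n, i ≠ j → ∀ k l : ℕ,
    1 ≤ k → k ≤ m i → 1 ≤ l → l ≤ m j → e i k ≠ e j l
  cover : ∀ x : E, ∃ i : Fin n, ∃ k : ℕ, 1 ≤ k ∧ k ≤ m i ∧ e i k = x

variable {E : Type*} [PartialOrder E] {n : ℕ}

/-- The state set of the ES-transform: `S = {[i,k] : 0 ≤ k ≤ m i}`, realized
as the pairs `(i,k)` of `Fin n × ℕ` with `k ≤ m i`. -/
def EventCP.StateSet (P : EventCP E n) : Set (Fin n × ℕ) :=
  {p | p.2 ≤ P.m p.1}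

/-- The ES-transform strict relation on states: `[i,r] < [j,s]` iff `r < s`
when `i = j`, and iff `r + 1 ≤ m i`, `1 ≤ s`, and `(i,r+1) ≺ (j,s)` in `E`
when `i ≠ j`. -/
def EventCP.slt (P : EventCP E n) (a b : Fin n × ℕ) : Prop :=
  if a.1 = b.1 then a.2 < b.2
  else a.2 + 1 ≤ P.m a.1 ∧ 1 ≤ b.2 ∧ P.e a.1 (a.2 + 1) < P.e b.1 b.2

/-- Two states are *incomparable* in the ES-transform. -/
def EventCP.IncompS (P : EventCP E n) (a b : Fin n × ℕ) : Prop :=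
  a ≠ b ∧ ¬ P.slt a b ∧ ¬ P.slt b a

/-- A finset of states is an *antichain* of the ES-transform `(S, <)`:
it consists of states and is pairwise incomparable. -/
def EventCP.IsACS (P : EventCP E n) (A : Finset (Fin n × ℕ)) : Prop :=
  ↑A ⊆ P.StateSet ∧ ∀ a ∈ A, ∀ b ∈ A, a ≠ b → P.IncompS a b

/-- The *width* of the ES-transform `(S, <)`: the maximum cardinality of an
antichain. -/
noncomputable def EventCP.widthS (P : EventCP E n) : ℕ :=
  sSup {c : ℕ | ∃ A : Finset (Fin n × ℕ), P.IsACS A ∧ A.card = c}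

/-- The reflexive closure `≤` of the ES-transform relation. -/
def EventCP.sleS (P : EventCP E n) (a b : Fin n × ℕ) : Prop :=
  a = b ∨ P.slt a b

/-- Order on antichains of the ES-transform: `A ≤ B` iff every element of `A`
is below some element of `B`. -/
def EventCP.ACleS (P : EventCP E n) (A B : Finset (Fin n × ℕ)) : Prop :=
  ∀ a ∈ A, ∃ b ∈ B, P.sleS a b

/-- A *width-antichain* of the ES-transform. -/
def EventCP.IsWAS (P : EventCP E n) (A : Finset (Fin n × ℕ)) : Prop :=
  P.IsACS A ∧ A.card = P.widthS


section Helpers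

lemma EventCP.mono_le (P : EventCP E n) (i : Fin n) {k l : ℕ}
    (h1 : 1 ≤ k) (h2 : k ≤ l) (h3 : l ≤ P.m i) : P.e i k ≤ P.e i l := by
  rcases h2.lt_or_eq with h | h
  · exact (P.mono i k l h1 h h3).le
  · rw [h]

lemma EventCP.chain_eq (P : EventCP E n) {A : Finset (Fin n × ℕ)} (hA : P.IsACS A)
    {p q : Fin n × ℕ} (hp : p ∈ A) (hq : q ∈ A) (h : p.1 = q.1) : p = q := by
  by_contra hne
  obtain ⟨-, h1, h2⟩ := hA.2 p hp q hq hne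
  simp only [EventCP.slt, if_pos h, if_pos h.symm] at h1 h2
  exact hne (Prod.ext h (by omega))

lemma EventCP.card_le_n (P : EventCP E n) {A : Finset (Fin n × ℕ)} (hA : P.IsACS A) :
    A.card ≤ n := by
  have hinj : Set.InjOn Prod.fst ↑A := fun p hp q hq h => P.chain_eq hA hp hq h
  calc A.card = (A.image Prod.fst).card := (Finset.card_image_of_injOn hinj).symm
    _ ≤ (Finset.univ : Finset (Fin n)).card := Finset.card_le_univ _
    _ = n := by simp

lemma EventCP.widthS_eq (P : EventCP E n) : P.widthS = n := by
  have hbase : P.IsACS (Finset.univ.image (fun i : Fin n => (i, 0))) := by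
    constructor
    · intro p hp
      simp only [Finset.coe_image, Set.mem_image] at hp
      obtain ⟨i, -, rfl⟩ := hp
      exact Nat.zero_le _
    · intro a ha b hb hne
      simp only [Finset.mem_image, Finset.mem_univ, true_and] at ha hb
      obtain ⟨i, rfl⟩ := ha; obtain ⟨j, rfl⟩ := hb
      refine ⟨hne, ?_, ?_⟩ <;>
      · simp only [EventCP.slt]
        split_ifs <;> simp
  have hn : n ∈ {c : ℕ | ∃ A : Finset (Fin n × ℕ), P.IsACS A ∧ A.card = c} := by
    refine ⟨_, hbase, ?_⟩
    rw [Finset.card_image_of_injective _ (fun i j h => (Prod.mk.injEq _ _ _ _).mp h |>.1)]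
    simp
  have hub : ∀ c ∈ {c : ℕ | ∃ A : Finset (Fin n × ℕ), P.IsACS A ∧ A.card = c}, c ≤ n := by
    rintro c ⟨A, hA, rfl⟩
    exact P.card_le_n hA
  exact le_antisymm (csSup_le ⟨n, hn⟩ hub) (le_csSup ⟨n, hub⟩ hn)

lemma EventCP.exists_mem_chain (P : EventCP E n) {A : Finset (Fin n × ℕ)}
    (hA : P.IsACS A) (hcard : A.card = n) (i : Fin n) : ∃ p ∈ A, p.1 = i := by
  have hinj : Set.InjOn Prod.fst ↑A := fun p hp q hq h => P.chain_eq hA hp hq h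
  have himg : A.image Prod.fst = Finset.univ := by
    apply Finset.eq_univ_of_card
    rw [Finset.card_image_of_injOn hinj, hcard]
    simp
  have : i ∈ A.image Prod.fst := himg ▸ Finset.mem_univ i
  simpa using this

lemma EventCP.snd_le (P : EventCP E n) {W'' : Finset (Fin n × ℕ)} (hA : P.IsACS W'')
    {p q b : Fin n × ℕ} (hb : b ∈ W'') (hpb : P.sleS p b) (hq : q ∈ W'') (hfst : q.1 = p.1) :
    p.2 ≤ q.2 := by
  rcases hpb with rfl | hlt
  · have h := P.chain_eq hA hq hb hfst
    rw [h]
  · by_cases hib : p.1 = b.1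
    · have hqb : q = b := P.chain_eq hA hq hb (hfst.trans hib)
      simp only [EventCP.slt, if_pos hib] at hlt
      rw [hqb]
      exact hlt.le
    · simp only [EventCP.slt, if_neg hib] at hlt
      obtain ⟨hm, hb1, hlt⟩ := hlt
      by_contra hcon
      push_neg at hcon
      have hq1 : q.1 ≠ b.1 := by rw [hfst]; exact hib
      have hqb : q ≠ b := fun h => hq1 (by rw [h])
      obtain ⟨-, hn1, -⟩ := hA.2 q hq b hb hqb
      apply hn1
      simp only [EventCP.slt, if_neg hq1]
      refine ⟨by rw [hfst]; omega, hb1, ?_⟩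
      calc P.e q.1 (q.2 + 1) < P.e p.1 (p.2 + 1) := by
            rw [hfst]; exact P.mono p.1 _ _ (by omega) (by omega) hm
        _ < P.e b.1 b.2 := hlt

end Helpers

/-- The ES-transform `(S, <)` is interleaving-consistent:
every width-antichain strictly below some width-antichain can be advanced to
a width-antichain differing from it in exactly one element. -/
theorem ES_transform_interleavingConsistent (P : EventCP E n) [Fintype E] :
    ∀ W : Finset (Fin n × ℕ), P.IsWAS W →
      (∃ W'' : Finset (Fin n × ℕ), P.IsWAS W'' ∧ P.ACleS W W'' ∧ W ≠ W'') →
      ∃ W' : Finset (Fin n × ℕ), P.IsWAS W' ∧ P.ACleS W W' ∧ W ≠ W' ∧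
        (W ∩ W').card = W.card - 1 := by
  intro W hW h
  obtain ⟨W'', hW'', hle, hne⟩ := h
  have hwidth := P.widthS_eq
  obtain ⟨hWA, hWc⟩ := hW
  obtain ⟨hW''A, hW''c⟩ := hW''
  rw [hwidth] at hWc hW''c
  have hpt : ∀ p ∈ W, ∀ q ∈ W'', q.1 = p.1 → p.2 ≤ q.2 := by
    intro p hp q hq hfst
    obtain ⟨b, hb, hpb⟩ := hle p hp
    exact P.snd_le hW''A hb hpb hq hfst
  set T := W.filter (fun p => ∃ q ∈ W'', q.1 = p.1 ∧ p.2 < q.2) with hT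
  have hTne : T.Nonempty := by
    by_contra hTe
    rw [Finset.not_nonempty_iff_eq_empty] at hTe
    apply hne
    apply Finset.eq_of_subset_of_card_le _ (by rw [hWc, hW''c])
    intro p hp
    obtain ⟨q, hq, hqfst⟩ := P.exists_mem_chain hW''A hW''c p.1
    have h1 : p.2 ≤ q.2 := hpt p hp q hq hqfst
    have h2 : ¬ p.2 < q.2 := by
      intro hlt
      have : p ∈ T := Finset.mem_filter.mpr ⟨hp, q, hq, hqfst, hlt⟩
      rw [hTe] at this
      exact absurd this (Finset.notMem_empty p)
    have heq : p = q := Prod.ext hqfst.symm (by omega)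
    rw [heq]; exact hq
  obtain ⟨y, hy, hymin⟩ : ∃ y ∈ T.image (fun p => P.e p.1 (p.2 + 1)),
      ∀ x ∈ T.image (fun p => P.e p.1 (p.2 + 1)), ¬ x < y := by
    obtain ⟨y, hy⟩ := Finset.exists_minimal (hTne.image (fun p => P.e p.1 (p.2 + 1)))
    exact ⟨y, hy.1, fun x hx hlt => lt_irrefl _ (lt_of_lt_of_le hlt (hy.2 hx hlt.le))⟩
  obtain ⟨p₀, hp₀T, hfy⟩ := Finset.mem_image.mp hy
  have hmin : ∀ q ∈ T, ¬ P.e q.1 (q.2 + 1) < P.e p₀.1 (p₀.2 + 1) := by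
    intro q hq
    rw [hfy]
    exact hymin _ (Finset.mem_image_of_mem _ hq)
  obtain ⟨hp₀W, b'', hb'', hb''fst, hb''lt⟩ := Finset.mem_filter.mp hp₀T
  have hb''m : b''.2 ≤ P.m b''.1 := hW''A.1 hb''
  rw [hb''fst] at hb''m
  have hm0 : p₀.2 + 1 ≤ P.m p₀.1 := by omega
  have hxW : (p₀.1, p₀.2 + 1) ∉ W := by
    intro hxm
    have h := P.chain_eq hWA hxm hp₀W rfl
    have h2 := congrArg Prod.snd h
    simp at h2
  have hkey : ∀ p ∈ W, p ≠ p₀ → P.IncompS (p₀.1, p₀.2 + 1) p := by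
    intro p hpW hpne
    have hp1 : p.1 ≠ p₀.1 := fun hcc => hpne (P.chain_eq hWA hpW hp₀W hcc)
    obtain ⟨-, hnpq, hnqp⟩ := hWA.2 p₀ hp₀W p hpW (Ne.symm hpne)
    refine ⟨?_, ?_, ?_⟩
    · intro hcc
      exact hp1 (by rw [← hcc])
    · intro hc
      simp only [EventCP.slt, if_neg (Ne.symm hp1)] at hc
      obtain ⟨h1, h2, h3⟩ := hc
      apply hnpq
      simp only [EventCP.slt, if_neg (Ne.symm hp1)]
      exact ⟨by omega, h2, lt_trans (P.mono p₀.1 _ _ (by omega) (by omega) h1) h3⟩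
    · intro hc
      simp only [EventCP.slt, if_neg hp1] at hc
      obtain ⟨h1, -, h3⟩ := hc
      obtain ⟨q'', hq'', hq''fst⟩ := P.exists_mem_chain hW''A hW''c p.1
      have hplt : p.2 < q''.2 := by
        by_contra hcon
        push_neg at hcon
        have hq''b : q''.1 ≠ b''.1 := by rw [hq''fst, hb''fst]; exact hp1
        obtain ⟨-, hni, -⟩ := hW''A.2 q'' hq'' b'' hb'' (fun hcc => hq''b (by rw [hcc]))
        apply hni
        simp only [EventCP.slt, if_neg hq''b]
        refine ⟨by rw [hq''fst]; omega, by omega, ?_⟩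
        calc P.e q''.1 (q''.2 + 1) ≤ P.e p.1 (p.2 + 1) := by
              rw [hq''fst]; exact P.mono_le p.1 (by omega) (by omega) h1
          _ < P.e p₀.1 (p₀.2 + 1) := h3
          _ ≤ P.e b''.1 b''.2 := by
              rw [hb''fst]; exact P.mono_le p₀.1 (by omega) (by omega) hb''m
      have hpT : p ∈ T := Finset.mem_filter.mpr ⟨hpW, q'', hq'', hq''fst, hplt⟩
      exact hmin p hpT h3
  refine ⟨insert (p₀.1, p₀.2 + 1) (W.erase p₀), ⟨⟨?_, ?_⟩, ?_⟩, ?_, ?_, ?_⟩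
  · -- subset of StateSet
    intro p hp
    rcases Finset.mem_insert.mp hp with rfl | hp
    · exact hm0
    · exact hWA.1 (Finset.mem_of_mem_erase hp)
  · -- pairwise incomparable
    intro a ha b hb hab
    rcases Finset.mem_insert.mp ha with rfl | ha <;>
      rcases Finset.mem_insert.mp hb with rfl | hb
    · exact absurd rfl hab
    · obtain ⟨hbne, hbW⟩ := Finset.mem_erase.mp hb
      exact hkey b hbW hbne
    · obtain ⟨hane, haW⟩ := Finset.mem_erase.mp ha
      obtain ⟨h1, h2, h3⟩ := hkey a haW hane
      exact ⟨Ne.symm h1, h3, h2⟩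
    · exact hWA.2 a (Finset.mem_of_mem_erase ha) b (Finset.mem_of_mem_erase hb) hab
  · -- card
    rw [Finset.card_insert_of_notMem (fun hcc => hxW (Finset.mem_of_mem_erase hcc)),
        Finset.card_erase_of_mem hp₀W, hWc, hwidth]
    have hn1 : 0 < n := hWc ▸ Finset.card_pos.mpr ⟨p₀, hp₀W⟩
    omega
  · -- ACleS
    intro a ha
    by_cases hap : a = p₀
    · refine ⟨(p₀.1, p₀.2 + 1), Finset.mem_insert_self _ _, Or.inr ?_⟩
      subst hap
      simp [EventCP.slt]
    · exact ⟨a, Finset.mem_insert_of_mem (Finset.mem_erase.mpr ⟨hap, ha⟩), Or.inl rfl⟩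
  · -- W ≠ W'
    intro hcc
    exact hxW (hcc ▸ Finset.mem_insert_self _ _)
  · -- intersection card
    have hinter : W ∩ insert (p₀.1, p₀.2 + 1) (W.erase p₀) = W.erase p₀ := by
      ext q
      simp only [Finset.mem_inter, Finset.mem_insert, Finset.mem_erase]
      constructor
      · rintro ⟨hqW, rfl | hq⟩
        · exact absurd hqW hxW
        · exact hq
      · rintro ⟨hqne, hqW⟩
        exact ⟨hqW, Or.inr ⟨hqne, hqW⟩⟩
    rw [hinter, Finset.card_erase_of_mem hp₀W]
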